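/- Let c0 = 0.558, let L ∈ ℕ with L ≥ 1, let k > 0 be a real number with log k ≤ (L+1)/c0, and let λ ≥ 6.5·L. Then the (L+1)×(L+1) real symmetric matrix (e^{λ}/k)·D + 1·zᵀ + z·1ᵀ is negative definite, where z ∈ ℝ^{L+1} has entries z_i = i/λ − 1 (i = 0, …, L), 1 ∈ ℝ^{L+1} is the all-ones vector, and D is the diagonal matrix with D_{ii} = (i/λ − 1)·i!/λ^i. -/

import Mathlib

open Matrix Finset


lemma aux_fact (i m : ℕ) : (i + m).factorial ≤ i.factorial * (i + m) ^ m := by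
  induction m with
  | zero => simp
  | succ m ih =>
    have h1 : (i + (m+1)).factorial = (i + m + 1) * (i + m).factorial := by
      rw [show i + (m+1) = (i+m) + 1 from rfl, Nat.factorial_succ]
    rw [h1]
    calc (i + m + 1) * (i + m).factorial ≤ (i + m + 1) * (i.factorial * (i + m) ^ m) :=
          Nat.mul_le_mul_left _ ih
      _ ≤ (i + m + 1) * (i.factorial * (i + m + 1) ^ m) :=
          Nat.mul_le_mul_left _ (Nat.mul_le_mul_left _ (Nat.pow_le_pow_left (Nat.le_succ _) m))
      _ = i.factorial * (i + (m+1)) ^ (m+1) := by ring_nf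

set_option maxHeartbeats 1000000 in

lemma aux_key (L : ℕ) (hL : 1 ≤ L) (k x : ℝ) (hk : 0 < k)
    (hlogk : Real.log k ≤ ((L : ℝ) + 1) / 0.558) (hx : 6.5 * L ≤ x) :
    ((L : ℝ) + 1) / 71.5 * (k * x ^ L) < Real.exp x * (L.factorial : ℝ) := by
  have hL1 : (1 : ℝ) ≤ (L : ℝ) := by exact_mod_cast hL
  have hxpos : (0 : ℝ) < x := lt_of_lt_of_le (by nlinarith) hx
  have hk_le : k ≤ Real.exp (((L : ℝ) + 1) / 0.558) := by
    calc k = Real.exp (Real.log k) := (Real.exp_log hk).symm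
      _ ≤ _ := Real.exp_le_exp.mpr hlogk
  -- Claim A : x ^ L ≤ (6.5 L)^L * exp (x - 6.5 L)
  have h65L : (0:ℝ) < 6.5 * L := by nlinarith
  have hA : x ^ L ≤ (6.5 * L) ^ L * Real.exp (x - 6.5 * L) := by
    set t : ℝ := x / (6.5 * L) with ht
    have ht1 : 1 ≤ t := (one_le_div h65L).mpr hx
    have hxe : x = 6.5 * L * t := by linear_combination -((eq_div_iff h65L.ne').mp ht)
    have htexp : t ≤ Real.exp (t - 1) := by
      have := Real.add_one_le_exp (t - 1); linarith
    have h1 : t ^ L ≤ Real.exp (t - 1) ^ L :=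
      pow_le_pow_left₀ (by linarith) htexp L
    have h2 : Real.exp (t - 1) ^ L = Real.exp ((L : ℝ) * (t - 1)) := by
      rw [← Real.exp_nat_mul]
    have h3 : (L : ℝ) * (t - 1) ≤ x - 6.5 * L := by
      have hLt : (L : ℝ) * t = x / 6.5 := by
        linear_combination (-1/6.5) * hxe
      nlinarith
    calc x ^ L = (6.5 * L) ^ L * t ^ L := by rw [hxe, mul_pow]
      _ ≤ (6.5 * L) ^ L * Real.exp (t - 1) ^ L := by
          apply mul_le_mul_of_nonneg_left h1 (by positivity)
      _ ≤ (6.5 * L) ^ L * Real.exp (x - 6.5 * L) := by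
          rw [h2]; exact mul_le_mul_of_nonneg_left (Real.exp_le_exp.mpr h3) (by positivity)
  -- Claim B : L^L ≤ exp L * L!
  have hB : (L : ℝ) ^ L ≤ Real.exp L * (L.factorial : ℝ) := by
    have := Real.pow_div_factorial_le_exp (x := (L : ℝ)) (by positivity) L
    have hf : (0:ℝ) < (L.factorial : ℝ) := by exact_mod_cast L.factorial_pos
    rw [div_le_iff₀ hf] at this
    linarith
  -- numeric exp facts
  have he1 : (2.7182818283 : ℝ) < Real.exp 1 := by
    have := Real.exp_one_gt_d9; linarith
  have he1' : Real.exp 1 < 2.7182818286 := by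
    have := Real.exp_one_lt_d9; linarith
  have hexp075 : (2 : ℝ) ≤ Real.exp 0.75 := by
    have h' : Real.exp 0.75 = Real.exp 1 * Real.exp (-0.25) := by
      rw [← Real.exp_add]; norm_num
    have := Real.add_one_le_exp (-0.25 : ℝ)
    nlinarith [Real.exp_pos (-0.25 : ℝ)]
  have hexp19 : (6.5 : ℝ) ≤ Real.exp 1.9 := by
    have h' : Real.exp 1.9 = Real.exp 1 * Real.exp 1 * Real.exp (-0.1) := by
      rw [← Real.exp_add, ← Real.exp_add]; norm_num
    have := Real.add_one_le_exp (-0.1 : ℝ)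
    nlinarith [Real.exp_pos (-0.1 : ℝ)]
  have hexp4 : Real.exp 4 ≤ 71.5 := by
    have h' : Real.exp 4 = Real.exp 1 ^ 4 := by
      rw [← Real.exp_nat_mul]; norm_num
    have h2 : Real.exp 1 ^ 4 ≤ (2.7182818286:ℝ) ^ 4 :=
      pow_le_pow_left₀ (le_of_lt (Real.exp_pos 1)) (le_of_lt he1') 4
    rw [h']; nlinarith
  -- L + 1 ≤ exp (0.75 L)
  have hL1exp : (L : ℝ) + 1 ≤ Real.exp (0.75 * L) := by
    have h2L : (L : ℝ) + 1 ≤ 2 ^ L := by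
      have := one_add_mul_le_pow (a := (1:ℝ)) (by norm_num) L
      norm_num at this; linarith
    calc (L : ℝ) + 1 ≤ 2 ^ L := h2L
      _ ≤ Real.exp 0.75 ^ L := pow_le_pow_left₀ (by norm_num) hexp075 L
      _ = Real.exp (0.75 * L) := by rw [← Real.exp_nat_mul]; ring_nf
  -- 6.5^L ≤ exp (1.9 L)
  have h65exp : (6.5 : ℝ) ^ L ≤ Real.exp (1.9 * L) := by
    calc (6.5:ℝ) ^ L ≤ Real.exp 1.9 ^ L := pow_le_pow_left₀ (by norm_num) hexp19 L
      _ = Real.exp (1.9 * L) := by rw [← Real.exp_nat_mul]; ring_nf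
  -- main numeric comparison: (L+1) * 6.5^L < 71.5 * exp (5.5 L - (L+1)/0.558)
  have hmain : ((L:ℝ) + 1) * 6.5 ^ L < 71.5 * Real.exp (5.5 * L - ((L:ℝ)+1) / 0.558) := by
    have hstep : Real.exp (0.75 * L) * Real.exp (1.9 * L) <
        Real.exp 4 * Real.exp (5.5 * L - ((L:ℝ)+1) / 0.558) := by
      rw [← Real.exp_add, ← Real.exp_add]
      apply Real.exp_lt_exp.mpr
      have h558 : ((L:ℝ)+1) / 0.558 = ((L:ℝ)+1) * (500/279) := by
        rw [div_eq_mul_inv]; norm_num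
      rw [h558]; nlinarith
    have h1 : ((L:ℝ)+1) * 6.5 ^ L ≤ Real.exp (0.75 * L) * Real.exp (1.9 * L) := by
      apply mul_le_mul hL1exp h65exp (by positivity) (le_of_lt (Real.exp_pos _))
    have h2 : Real.exp 4 * Real.exp (5.5 * L - ((L:ℝ)+1) / 0.558) ≤
        71.5 * Real.exp (5.5 * L - ((L:ℝ)+1) / 0.558) :=
      mul_le_mul_of_nonneg_right hexp4 (le_of_lt (Real.exp_pos _))
    linarith
  -- assemble
  have hfpos : (0:ℝ) < (L.factorial : ℝ) := by exact_mod_cast L.factorial_pos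
  have hkx : k * x ^ L ≤ Real.exp (((L:ℝ)+1)/0.558) * ((6.5*L)^L * Real.exp (x - 6.5*L)) := by
    apply mul_le_mul hk_le hA (by positivity) (le_of_lt (Real.exp_pos _))
  have h65pow : ((6.5:ℝ) * L) ^ L = 6.5 ^ L * (L:ℝ) ^ L := mul_pow _ _ _
  calc ((L:ℝ)+1)/71.5 * (k * x ^ L)
      ≤ ((L:ℝ)+1)/71.5 * (Real.exp (((L:ℝ)+1)/0.558) * ((6.5*L)^L * Real.exp (x - 6.5*L))) := by
        apply mul_le_mul_of_nonneg_left hkx (by positivity)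
    _ = ((L:ℝ)+1)/71.5 * Real.exp (((L:ℝ)+1)/0.558) * Real.exp (x - 6.5*L) * 6.5 ^ L * (L:ℝ)^L := by
        rw [h65pow]; ring
    _ ≤ ((L:ℝ)+1)/71.5 * Real.exp (((L:ℝ)+1)/0.558) * Real.exp (x - 6.5*L) * 6.5 ^ L *
          (Real.exp L * (L.factorial : ℝ)) := by
        apply mul_le_mul_of_nonneg_left hB (by positivity)
    _ = (((L:ℝ)+1) * 6.5 ^ L) * (Real.exp (((L:ℝ)+1)/0.558) * Real.exp (x - 6.5*L) * Real.exp L)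
          * (L.factorial : ℝ) / 71.5 := by ring
    _ < (71.5 * Real.exp (5.5 * L - ((L:ℝ)+1) / 0.558)) *
          (Real.exp (((L:ℝ)+1)/0.558) * Real.exp (x - 6.5*L) * Real.exp L) * (L.factorial : ℝ) / 71.5 := by
        gcongr
    _ = Real.exp x * (L.factorial : ℝ) := by
        rw [mul_assoc (71.5:ℝ), ← Real.exp_add, ← Real.exp_add, ← Real.exp_add,
          show 5.5 * (L:ℝ) - ((L:ℝ)+1)/0.558 + (((L:ℝ)+1)/0.558 + (x - 6.5*L) + L) = x by ring]
        ring

set_option maxHeartbeats 1000000 in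
theorem stmt_4 (L : ℕ) (hL : 1 ≤ L) (k : ℝ) (hk : 0 < k)
    (hlogk : Real.log k ≤ ((L : ℝ) + 1) / 0.558)
    (x : ℝ) (hx : 6.5 * L ≤ x) :
    ∀ y : Fin (L + 1) → ℝ, y ≠ 0 →
      dotProduct y
        (Matrix.mulVec
          ((Real.exp x / k) •
              Matrix.diagonal
                (fun i : Fin (L + 1) =>
                  (((i : ℕ) : ℝ) / x - 1) * ((i : ℕ).factorial : ℝ) / x ^ (i : ℕ)) +
            (Matrix.vecMulVec (fun _ : Fin (L + 1) => (1 : ℝ))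
                (fun i : Fin (L + 1) => ((i : ℕ) : ℝ) / x - 1) +
              Matrix.vecMulVec (fun i : Fin (L + 1) => ((i : ℕ) : ℝ) / x - 1)
                (fun _ : Fin (L + 1) => (1 : ℝ))))
          y) < 0 := by
  intro y hy
  have hkey : ((L : ℝ) + 1) / 71.5 * (k * x ^ L) < Real.exp x * (L.factorial : ℝ) :=
    aux_key L hL k x hk hlogk hx
  have hL1 : (1 : ℝ) ≤ (L : ℝ) := by exact_mod_cast hL
  have hxpos : (0 : ℝ) < x := by nlinarith
  set c : ℝ := Real.exp x / k with hc
  have hcpos : 0 < c := div_pos (Real.exp_pos x) hk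
  set a : Fin (L + 1) → ℝ := fun i => ((i : ℕ) : ℝ) / x - 1 with ha
  set d : Fin (L + 1) → ℝ :=
    fun i => (((i : ℕ) : ℝ) / x - 1) * ((i : ℕ).factorial : ℝ) / x ^ (i : ℕ) with hd
  set S : ℝ := ∑ i, y i with hS
  set T : ℝ := ∑ i, a i * y i with hT
  set M := ((Real.exp x / k) • Matrix.diagonal d +
      (Matrix.vecMulVec (fun _ : Fin (L + 1) => (1 : ℝ)) a +
        Matrix.vecMulVec a (fun _ : Fin (L + 1) => (1 : ℝ)))) with hM
  have hmv : ∀ i, (M *ᵥ y) i = c * (d i * y i) + (T + a i * S) := by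
    intro i
    show (∑ j, M i j * y j) = _
    have : ∀ j, M i j * y j =
        (if i = j then c * (d i * y j) else 0) + (a j * y j + a i * y j) := by
      intro j
      simp only [hM, Matrix.add_apply, Matrix.smul_apply, Matrix.diagonal_apply,
        Matrix.vecMulVec_apply, smul_eq_mul, one_mul, mul_one]
      split <;> ring
    rw [Finset.sum_congr rfl fun j _ => this j]
    rw [Finset.sum_add_distrib, Finset.sum_ite_eq, Finset.sum_add_distrib, ← Finset.mul_sum]
    simp [hT, hS, Finset.mul_sum]
  have hQ : dotProduct y (M *ᵥ y) = c * (∑ i, d i * y i ^ 2) + 2 * S * T := by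
    show (∑ i, y i * (M *ᵥ y) i) = _
    calc (∑ i, y i * (M *ᵥ y) i)
        = ∑ i, (c * (d i * y i ^ 2) + (y i * T + a i * y i * S)) := by
          refine Finset.sum_congr rfl fun i _ => ?_; rw [hmv i]; ring
      _ = c * (∑ i, d i * y i ^ 2) + 2 * S * T := by
          rw [Finset.sum_add_distrib, Finset.sum_add_distrib, ← Finset.mul_sum]
          rw [← Finset.sum_mul, ← Finset.sum_mul, ← hS, ← hT]
          ring
  rw [hQ]
  -- now the inequality
  have hile : ∀ i : Fin (L + 1), ((i : ℕ) : ℝ) ≤ (L : ℝ) := by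
    intro i; exact_mod_cast Fin.is_le i
  have hLx : (L : ℝ) ≤ x := by nlinarith
  have hLix : ∀ i : Fin (L + 1), ((i : ℕ) : ℝ) / x ≤ 1 / 6.5 := by
    intro i
    rw [div_le_div_iff₀ hxpos (by norm_num)]
    nlinarith [hile i]
  have hax : ∀ i : Fin (L + 1), a i ≤ -(5.5 / 6.5) := by
    intro i
    have := hLix i
    simp only [ha]
    nlinarith
  set wL : ℝ := (L.factorial : ℝ) / x ^ L with hwL
  have hwLpos : 0 < wL := div_pos (by exact_mod_cast L.factorial_pos) (by positivity)
  have hwge : ∀ i : Fin (L + 1), wL ≤ ((i : ℕ).factorial : ℝ) / x ^ (i : ℕ) := by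
    intro i
    have him : (i : ℕ) + (L - (i : ℕ)) = L := Nat.add_sub_cancel' (Fin.is_le i)
    have hfa : (L.factorial : ℝ) ≤ ((i : ℕ).factorial : ℝ) * (L : ℝ) ^ (L - (i : ℕ)) := by
      have := aux_fact (i : ℕ) (L - (i : ℕ))
      rw [him] at this
      exact_mod_cast this
    have hfb : (L.factorial : ℝ) ≤ ((i : ℕ).factorial : ℝ) * x ^ (L - (i : ℕ)) := by
      calc (L.factorial : ℝ) ≤ ((i : ℕ).factorial : ℝ) * (L : ℝ) ^ (L - (i : ℕ)) := hfa
        _ ≤ ((i : ℕ).factorial : ℝ) * x ^ (L - (i : ℕ)) := by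
            apply mul_le_mul_of_nonneg_left (pow_le_pow_left₀ (by positivity) hLx _)
              (by positivity)
    rw [hwL, div_le_div_iff₀ (by positivity) (by positivity)]
    calc (L.factorial : ℝ) * x ^ (i : ℕ) ≤
        (((i : ℕ).factorial : ℝ) * x ^ (L - (i : ℕ))) * x ^ (i : ℕ) := by
          apply mul_le_mul_of_nonneg_right hfb (by positivity)
      _ = ((i : ℕ).factorial : ℝ) * x ^ L := by
          rw [mul_assoc, ← pow_add]
          rw [show L - (i : ℕ) + (i : ℕ) = L from by omega]
  have hdle : ∀ i : Fin (L + 1), d i ≤ -(5.5 / 6.5) * wL := by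
    intro i
    have h1 : d i = a i * (((i : ℕ).factorial : ℝ) / x ^ (i : ℕ)) := by
      simp only [hd, ha]; ring
    rw [h1]
    have haneg : a i ≤ 0 := le_trans (hax i) (by norm_num)
    have h2 : a i * (((i : ℕ).factorial : ℝ) / x ^ (i : ℕ)) ≤ a i * wL :=
      mul_le_mul_of_nonpos_left (hwge i) haneg
    have h3 : a i * wL ≤ -(5.5 / 6.5) * wL :=
      mul_le_mul_of_nonneg_right (hax i) hwLpos.le
    linarith
  set Y : ℝ := ∑ i, y i ^ 2 with hY
  have hYpos : 0 < Y := by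
    have hne : ∃ i, y i ≠ 0 := Function.ne_iff.mp hy
    obtain ⟨i, hi⟩ := hne
    apply Finset.sum_pos' (fun j _ => sq_nonneg _) ⟨i, Finset.mem_univ i, by positivity⟩
  have hsum1 : (∑ i, d i * y i ^ 2) ≤ -(5.5 / 6.5) * wL * Y := by
    rw [hY, Finset.mul_sum]
    exact Finset.sum_le_sum fun i _ =>
      mul_le_mul_of_nonneg_right (hdle i) (sq_nonneg _)
  -- Cauchy-Schwarz on S + T
  have hST : S + T = ∑ i : Fin (L+1), (((i : ℕ) : ℝ) / x) * y i := by
    rw [hS, hT, ← Finset.sum_add_distrib]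
    refine Finset.sum_congr rfl fun i _ => ?_
    simp only [ha]; ring
  have hCS : (S + T) ^ 2 ≤ (((L : ℝ) + 1) * (1 / 6.5) ^ 2) * Y := by
    rw [hST]
    calc (∑ i : Fin (L+1), (((i : ℕ) : ℝ) / x) * y i) ^ 2
        ≤ (∑ i : Fin (L+1), (((i : ℕ) : ℝ) / x) ^ 2) * ∑ i : Fin (L+1), y i ^ 2 :=
          Finset.sum_mul_sq_le_sq_mul_sq _ _ _
      _ ≤ (((L : ℝ) + 1) * (1 / 6.5) ^ 2) * Y := by
          rw [← hY]
          apply mul_le_mul_of_nonneg_right _ hYpos.le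
          calc (∑ i : Fin (L+1), (((i : ℕ) : ℝ) / x) ^ 2)
              ≤ ∑ _i : Fin (L+1), (1 / 6.5 : ℝ) ^ 2 := by
                refine Finset.sum_le_sum fun i _ => ?_
                have h1 := hLix i
                have h2 : 0 ≤ ((i : ℕ) : ℝ) / x := by positivity
                nlinarith
            _ = ((L : ℝ) + 1) * (1 / 6.5) ^ 2 := by
                rw [Finset.sum_const, Finset.card_univ, Fintype.card_fin]
                push_cast; ring
  -- key : (L+1)/71.5 < c * wL
  have hkey2 : ((L : ℝ) + 1) / 71.5 < c * wL := by
    have hkx : 0 < k * x ^ L := by positivity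
    rw [hc, hwL]
    rw [div_mul_div_comm]
    rw [lt_div_iff₀ hkx]
    calc ((L:ℝ)+1)/71.5 * (k * x ^ L) < Real.exp x * (L.factorial : ℝ) := hkey
      _ = Real.exp x * (L.factorial : ℝ) := rfl
  -- finish
  have h2ST : 2 * S * T ≤ (S + T) ^ 2 / 2 := by nlinarith [sq_nonneg (S - T)]
  have hfinal : c * (∑ i, d i * y i ^ 2) + 2 * S * T ≤
      c * (-(5.5 / 6.5) * wL * Y) + (((L : ℝ) + 1) * (1 / 6.5) ^ 2) * Y / 2 := by
    have := mul_le_mul_of_nonneg_left hsum1 hcpos.le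
    linarith
  have hcoef : -(5.5 / 6.5) * (c * wL) + ((L : ℝ) + 1) * (1 / 6.5) ^ 2 / 2 < 0 := by
    have h : (5.5 / 6.5 : ℝ) * (((L : ℝ) + 1) / 71.5) = ((L : ℝ) + 1) * (1 / 6.5) ^ 2 / 2 := by
      ring
    linarith
  have hneg : c * (-(5.5 / 6.5) * wL * Y) + (((L : ℝ) + 1) * (1 / 6.5) ^ 2) * Y / 2 < 0 := by
    have heq : c * (-(5.5 / 6.5) * wL * Y) + (((L : ℝ) + 1) * (1 / 6.5) ^ 2) * Y / 2 =
        (-(5.5 / 6.5) * (c * wL) + ((L : ℝ) + 1) * (1 / 6.5) ^ 2 / 2) * Y := by ring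
    rw [heq]
    exact mul_neg_of_neg_of_pos hcoef hYpos
  linarith
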